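/- For m = 0, ℓ ≠ 0, w ≠ 0, the curve x(t) = (v/(ℓw))cos(ℓwt) + (u/(ℓw))sin(ℓwt) − v/(ℓw), y(t) = (v/(ℓw))sin(ℓwt) − (u/(ℓw))cos(ℓwt) + u/(ℓw), z(t) = wt + ((u²+v²)/(2w))t − ((u²+v²)/(2ℓw²))sin(ℓwt) is a geodesic of the Heisenberg metric ds²_{ℓ,0} = dx² + dy² + (dz + (ℓ/2)(y dx − x dy))², with γ(0) = 0 and initial velocity having frame components (u, v, w). -/

import Mathlib

open Real

/-- Partial derivative in the `i`-th coordinate direction on `ℝ³`. -/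
noncomputable def pd3 (i : Fin 3) (f : (Fin 3 → ℝ) → ℝ) (p : Fin 3 → ℝ) : ℝ :=
  fderiv ℝ f p (Pi.single i 1)

/-- `D = 1 + m (x² + y²)`. -/
noncomputable def Dcv (m : ℝ) (p : Fin 3 → ℝ) : ℝ := 1 + m * (p 0 ^ 2 + p 1 ^ 2)

/-- The Cartan–Vranceanu metric `ds²_{l,m}` in coordinates, as a matrix of coefficients. -/
noncomputable def gCV (l m : ℝ) (p : Fin 3 → ℝ) : Matrix (Fin 3) (Fin 3) ℝ :=
  !![1 / Dcv m p ^ 2 + (l * p 1 / (2 * Dcv m p)) ^ 2,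
     -(l ^ 2 * p 0 * p 1) / (4 * Dcv m p ^ 2),
     l * p 1 / (2 * Dcv m p);
     -(l ^ 2 * p 0 * p 1) / (4 * Dcv m p ^ 2),
     1 / Dcv m p ^ 2 + (l * p 0 / (2 * Dcv m p)) ^ 2,
     -(l * p 0) / (2 * Dcv m p);
     l * p 1 / (2 * Dcv m p),
     -(l * p 0) / (2 * Dcv m p),
     1]

/-- Christoffel symbols of the Levi-Civita connection of `gCV`. -/
noncomputable def christoffelCV (l m : ℝ) (k i j : Fin 3) (p : Fin 3 → ℝ) : ℝ :=
  (1 / 2) * ∑ r : Fin 3, (gCV l m p)⁻¹ k r *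
    (pd3 i (fun q => gCV l m q r j) p + pd3 j (fun q => gCV l m q r i) p
      - pd3 r (fun q => gCV l m q i j) p)

/-- The geodesic equation for `gCV` at time `t`. -/
def geodesicEqCV (l m : ℝ) (c : ℝ → Fin 3 → ℝ) (t : ℝ) : Prop :=
  ∀ k : Fin 3, deriv (deriv c) t k +
    ∑ i : Fin 3, ∑ j : Fin 3,
      christoffelCV l m k i j (c t) * deriv c t i * deriv c t j = 0


open ContinuousLinearMap in
lemma pd3_poly (A B C D E F : ℝ) (i : Fin 3) (p : Fin 3 → ℝ) :
    pd3 i (fun q => A + B * q 0 + C * q 1 + D * (q 0 * q 0) + E * (q 1 * q 1) + F * (q 0 * q 1)) p =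
    ![B + 2 * D * p 0 + F * p 1, C + 2 * E * p 1 + F * p 0, 0] i := by
  have h0 : HasFDerivAt (fun q : Fin 3 → ℝ => q 0) (proj 0 : (Fin 3 → ℝ) →L[ℝ] ℝ) p :=
    (proj 0 : (Fin 3 → ℝ) →L[ℝ] ℝ).hasFDerivAt
  have h1 : HasFDerivAt (fun q : Fin 3 → ℝ => q 1) (proj 1 : (Fin 3 → ℝ) →L[ℝ] ℝ) p :=
    (proj 1 : (Fin 3 → ℝ) →L[ℝ] ℝ).hasFDerivAt
  have H := ((((h0.const_mul B).const_add A).add (h1.const_mul C)).add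
      ((h0.mul h0).const_mul D)).add (((h1.mul h1).const_mul E)) |>.add
      (((h0.mul h1).const_mul F))
  rw [pd3, (show HasFDerivAt (fun q : Fin 3 → ℝ => A + B * q 0 + C * q 1 + D * (q 0 * q 0) + E * (q 1 * q 1) + F * (q 0 * q 1)) _ p from H).fderiv]
  fin_cases i <;>
    simp [Pi.single_apply] <;> ring

lemma gCV_zero (l : ℝ) (p : Fin 3 → ℝ) :
    gCV l 0 p = !![1 + l ^ 2 / 4 * (p 1 * p 1), -(l ^ 2 / 4) * (p 0 * p 1), l / 2 * p 1;
      -(l ^ 2 / 4) * (p 0 * p 1), 1 + l ^ 2 / 4 * (p 0 * p 0), -(l / 2) * p 0;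
      l / 2 * p 1, -(l / 2) * p 0, 1] := by
  have hD : Dcv 0 p = 1 := by simp [Dcv]
  ext i j
  fin_cases i <;> fin_cases j <;> simp [gCV, hD] <;> ring

lemma gCV_inv (l : ℝ) (p : Fin 3 → ℝ) :
    (gCV l 0 p)⁻¹ = !![1, 0, -(l / 2) * p 1; 0, 1, l / 2 * p 0;
      -(l / 2) * p 1, l / 2 * p 0, 1 + l ^ 2 / 4 * (p 0 * p 0 + p 1 * p 1)] := by
  apply Matrix.inv_eq_right_inv
  rw [gCV_zero]
  ext i j
  fin_cases i <;> fin_cases j <;>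
    simp [Matrix.mul_apply, Fin.sum_univ_three, Matrix.one_apply] <;> ring

lemma pd3_gCV (l : ℝ) (i r j : Fin 3) (p : Fin 3 → ℝ) :
    pd3 i (fun q => gCV l 0 q r j) p =
    ![ !![0, -(l^2/4)*p 1, 0; -(l^2/4)*p 1, l^2/2*p 0, -(l/2); 0, -(l/2), 0],
       !![l^2/2*p 1, -(l^2/4)*p 0, l/2; -(l^2/4)*p 0, 0, 0; l/2, 0, 0],
       !![(0:ℝ),0,0;0,0,0;0,0,0] ] i r j := by
  have e00 : (fun q : Fin 3 → ℝ => gCV l 0 q 0 0) = (fun q => (1:ℝ) + 0 * q 0 + 0 * q 1 + 0 * (q 0 * q 0) + (l^2/4) * (q 1 * q 1) + 0 * (q 0 * q 1)) := by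
    funext q; rw [gCV_zero]; simp; try ring
  have e01 : (fun q : Fin 3 → ℝ => gCV l 0 q 0 1) = (fun q => (0:ℝ) + 0 * q 0 + 0 * q 1 + 0 * (q 0 * q 0) + 0 * (q 1 * q 1) + (-(l^2/4)) * (q 0 * q 1)) := by
    funext q; rw [gCV_zero]; simp; try ring
  have e02 : (fun q : Fin 3 → ℝ => gCV l 0 q 0 2) = (fun q => (0:ℝ) + 0 * q 0 + (l/2) * q 1 + 0 * (q 0 * q 0) + 0 * (q 1 * q 1) + 0 * (q 0 * q 1)) := by
    funext q; rw [gCV_zero]; simp; try ring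
  have e10 : (fun q : Fin 3 → ℝ => gCV l 0 q 1 0) = (fun q => (0:ℝ) + 0 * q 0 + 0 * q 1 + 0 * (q 0 * q 0) + 0 * (q 1 * q 1) + (-(l^2/4)) * (q 0 * q 1)) := by
    funext q; rw [gCV_zero]; simp; try ring
  have e11 : (fun q : Fin 3 → ℝ => gCV l 0 q 1 1) = (fun q => (1:ℝ) + 0 * q 0 + 0 * q 1 + (l^2/4) * (q 0 * q 0) + 0 * (q 1 * q 1) + 0 * (q 0 * q 1)) := by
    funext q; rw [gCV_zero]; simp; try ring
  have e12 : (fun q : Fin 3 → ℝ => gCV l 0 q 1 2) = (fun q => (0:ℝ) + (-(l/2)) * q 0 + 0 * q 1 + 0 * (q 0 * q 0) + 0 * (q 1 * q 1) + 0 * (q 0 * q 1)) := by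
    funext q; rw [gCV_zero]; simp; try ring
  have e20 : (fun q : Fin 3 → ℝ => gCV l 0 q 2 0) = (fun q => (0:ℝ) + 0 * q 0 + (l/2) * q 1 + 0 * (q 0 * q 0) + 0 * (q 1 * q 1) + 0 * (q 0 * q 1)) := by
    funext q; rw [gCV_zero]; simp; try ring
  have e21 : (fun q : Fin 3 → ℝ => gCV l 0 q 2 1) = (fun q => (0:ℝ) + (-(l/2)) * q 0 + 0 * q 1 + 0 * (q 0 * q 0) + 0 * (q 1 * q 1) + 0 * (q 0 * q 1)) := by
    funext q; rw [gCV_zero]; simp; try ring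
  have e22 : (fun q : Fin 3 → ℝ => gCV l 0 q 2 2) = (fun q => (1:ℝ) + 0 * q 0 + 0 * q 1 + 0 * (q 0 * q 0) + 0 * (q 1 * q 1) + 0 * (q 0 * q 1)) := by
    funext q; rw [gCV_zero]; simp
  fin_cases r <;> fin_cases j <;> fin_cases i <;>
    simp only [Fin.zero_eta, Fin.mk_one, Fin.reduceFinMk, e00, e01, e02, e10, e11, e12, e20, e21, e22, pd3_poly] <;>
    (try simp) <;> (try ring) <;> (try exact Or.inl trivial) <;> (try rfl)

set_option maxHeartbeats 1000000 in
lemma christoffel_eval (l : ℝ) (k i j : Fin 3) (p : Fin 3 → ℝ) :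
    christoffelCV l 0 k i j p =
    ![ !![0, l^2/4*p 1, 0; l^2/4*p 1, -(l^2/2)*p 0, l/2; 0, l/2, 0],
       !![-(l^2/2)*p 1, l^2/4*p 0, -(l/2); l^2/4*p 0, 0, 0; -(l/2), 0, 0],
       !![-(l^3/4)*(p 0*p 1), l^3/8*(p 0*p 0 - p 1*p 1), -(l^2/4)*p 0;
          l^3/8*(p 0*p 0 - p 1*p 1), l^3/4*(p 0*p 1), -(l^2/4)*p 1;
          -(l^2/4)*p 0, -(l^2/4)*p 1, 0] ] k i j := by
  rw [christoffelCV, Fin.sum_univ_three, gCV_inv]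
  simp only [pd3_gCV]
  fin_cases k <;> fin_cases i <;> fin_cases j <;>
    simp [Matrix.vecHead, Matrix.vecTail] <;> (try ring) <;> (try tauto)

/-- The claimed geodesic of the Heisenberg group `(m = 0)` with `w ≠ 0`:
`x(t) = (v/(ℓw))cos(ℓwt) + (u/(ℓw))sin(ℓwt) − v/(ℓw)`,
`y(t) = (v/(ℓw))sin(ℓwt) − (u/(ℓw))cos(ℓwt) + u/(ℓw)`,
`z(t) = wt + ((u²+v²)/(2w))t − ((u²+v²)/(2ℓw²))sin(ℓwt)`. -/
noncomputable def c10 (l u v w : ℝ) (t : ℝ) : Fin 3 → ℝ :=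
  ![v / (l * w) * Real.cos (l * w * t) + u / (l * w) * Real.sin (l * w * t) - v / (l * w),
    v / (l * w) * Real.sin (l * w * t) - u / (l * w) * Real.cos (l * w * t) + u / (l * w),
    w * t + (u ^ 2 + v ^ 2) / (2 * w) * t
      - (u ^ 2 + v ^ 2) / (2 * l * w ^ 2) * Real.sin (l * w * t)]


noncomputable def c10d (l u v w : ℝ) (t : ℝ) : Fin 3 → ℝ :=
  ![-v * Real.sin (l * w * t) + u * Real.cos (l * w * t),
    v * Real.cos (l * w * t) + u * Real.sin (l * w * t),
    w + (u ^ 2 + v ^ 2) / (2 * w) - (u ^ 2 + v ^ 2) / (2 * w) * Real.cos (l * w * t)]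

noncomputable def c10dd (l u v w : ℝ) (t : ℝ) : Fin 3 → ℝ :=
  ![-(l * w) * (v * Real.cos (l * w * t) + u * Real.sin (l * w * t)),
    (l * w) * (u * Real.cos (l * w * t) - v * Real.sin (l * w * t)),
    l * (u ^ 2 + v ^ 2) / 2 * Real.sin (l * w * t)]

lemma hasDerivAt_c10 (l u v w : ℝ) (hl : l ≠ 0) (hw : w ≠ 0) (t : ℝ) :
    HasDerivAt (c10 l u v w) (c10d l u v w t) t := by
  have hlw : HasDerivAt (fun t : ℝ => l * w * t) (l * w) t := by
    simpa using (hasDerivAt_id t).const_mul (l * w)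
  rw [hasDerivAt_pi]
  intro i
  fin_cases i
  · have H := ((hlw.cos.const_mul (v / (l * w))).add
      (hlw.sin.const_mul (u / (l * w)))).sub_const (v / (l * w))
    have e : (fun t => c10 l u v w t 0) =
        fun t => v / (l * w) * Real.cos (l * w * t) + u / (l * w) * Real.sin (l * w * t)
          - v / (l * w) := by funext t; simp [c10]
    rw [show (⟨0, by omega⟩ : Fin 3) = 0 from rfl, e]
    convert H using 1
    · rfl
    simp [c10d]
    field_simp
  · have H := ((hlw.sin.const_mul (v / (l * w))).sub
      (hlw.cos.const_mul (u / (l * w)))).add_const (u / (l * w))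
    have e : (fun t => c10 l u v w t 1) =
        fun t => v / (l * w) * Real.sin (l * w * t)
          - u / (l * w) * Real.cos (l * w * t) + u / (l * w) := by
      funext t; simp [c10]
    rw [show (⟨1, by omega⟩ : Fin 3) = 1 from rfl, e]
    convert H using 1
    · rfl
    simp [c10d]
    field_simp
  · have H := (((hasDerivAt_id t).const_mul w).add
      ((hasDerivAt_id t).const_mul ((u ^ 2 + v ^ 2) / (2 * w)))).sub
      (hlw.sin.const_mul ((u ^ 2 + v ^ 2) / (2 * l * w ^ 2)))
    have e : (fun t => c10 l u v w t 2) =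
        fun t => (w * t + (u ^ 2 + v ^ 2) / (2 * w) * t)
          - (u ^ 2 + v ^ 2) / (2 * l * w ^ 2) * Real.sin (l * w * t) := by
      funext t; simp [c10]
    rw [show (⟨2, by omega⟩ : Fin 3) = 2 from rfl, e]
    convert H using 1
    · rfl
    simp [c10dd, c10d]
    field_simp

lemma hasDerivAt_c10d (l u v w : ℝ) (hl : l ≠ 0) (hw : w ≠ 0) (t : ℝ) :
    HasDerivAt (c10d l u v w) (c10dd l u v w t) t := by
  have hlw : HasDerivAt (fun t : ℝ => l * w * t) (l * w) t := by
    simpa using (hasDerivAt_id t).const_mul (l * w)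
  rw [hasDerivAt_pi]
  intro i
  fin_cases i
  · have H := (hlw.sin.const_mul (-v)).add (hlw.cos.const_mul u)
    have e : (fun t => c10d l u v w t 0) =
        fun t => -v * Real.sin (l * w * t) + u * Real.cos (l * w * t) := by
      funext t; simp [c10d]
    rw [show (⟨0, by omega⟩ : Fin 3) = 0 from rfl, e]
    convert H using 1
    · rfl
    simp [c10dd]
    ring
  · have H := (hlw.cos.const_mul v).add (hlw.sin.const_mul u)
    have e : (fun t => c10d l u v w t 1) =
        fun t => v * Real.cos (l * w * t) + u * Real.sin (l * w * t) := by
      funext t; simp [c10d]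
    rw [show (⟨1, by omega⟩ : Fin 3) = 1 from rfl, e]
    convert H using 1
    · rfl
    simp [c10dd]
    ring
  · have H := (hasDerivAt_const t (w + (u ^ 2 + v ^ 2) / (2 * w))).sub
      (hlw.cos.const_mul ((u ^ 2 + v ^ 2) / (2 * w)))
    have e : (fun t => c10d l u v w t 2) =
        fun t => (w + (u ^ 2 + v ^ 2) / (2 * w))
          - (u ^ 2 + v ^ 2) / (2 * w) * Real.cos (l * w * t) := by
      funext t; simp [c10d]
    rw [show (⟨2, by omega⟩ : Fin 3) = 2 from rfl, e]
    convert H using 1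
    · rfl
    simp [c10dd]
    field_simp

/-- For `m = 0`, `ℓ ≠ 0`, `w ≠ 0`, the curve `c10` is a geodesic of the Heisenberg
metric `ds²_{ℓ,0} = dx² + dy² + (dz + (ℓ/2)(y dx − x dy))²` with `γ(0) = 0` and
initial velocity of frame components `(u, v, w)`. -/
theorem stmt10 (l u v w : ℝ) (hl : l ≠ 0) (hw : w ≠ 0) :
    c10 l u v w 0 = ![0, 0, 0] ∧
    deriv (c10 l u v w) 0 = ![u, v, w] ∧
    ∀ t : ℝ, geodesicEqCV l 0 (c10 l u v w) t := by
  have hd : deriv (c10 l u v w) = c10d l u v w :=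
    funext fun t => (hasDerivAt_c10 l u v w hl hw t).deriv
  refine ⟨?_, ?_, ?_⟩
  · funext i
    fin_cases i <;> simp [c10]
  · rw [hd]
    funext i
    fin_cases i <;> simp [c10d] <;> ring
  · intro t k
    rw [hd, show deriv (c10d l u v w) t = c10dd l u v w t from
      (hasDerivAt_c10d l u v w hl hw t).deriv]
    simp only [Fin.sum_univ_three, christoffel_eval]
    have h := sin_sq_add_cos_sq (l*w*t)
    have hli : l * l⁻¹ = 1 := mul_inv_cancel₀ hl
    have hwi : w * w⁻¹ = 1 := mul_inv_cancel₀ hw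
    fin_cases k
    · simp [c10, c10d, c10dd, Matrix.vecHead, Matrix.vecTail]
      linear_combination (-(l*(u^2+v^2)*(v*Real.cos (l*w*t)+u*Real.sin (l*w*t))/(2*w))) * h + (-(l*(u^2+v^2)*(Real.sin (l*w*t)^2+Real.cos (l*w*t)^2-Real.cos (l*w*t))*(v*Real.cos (l*w*t)+u*Real.sin (l*w*t))/(2*w))) * hli
    · simp [c10, c10d, c10dd, Matrix.vecHead, Matrix.vecTail]
      linear_combination (l*(u^2+v^2)*(u*Real.cos (l*w*t) - v*Real.sin (l*w*t))/(2*w)) * h + (l*(u^2+v^2)*(Real.sin (l*w*t)^2+Real.cos (l*w*t)^2-Real.cos (l*w*t))*(u*Real.cos (l*w*t)-v*Real.sin (l*w*t))/(2*w)) * hli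
    · simp [c10, c10d, c10dd, Matrix.vecHead, Matrix.vecTail]
      linear_combination (l*(u^2+v^2)^2*Real.sin (l*w*t)/(4*w^2)) * h
        + ((l^3*(l⁻¹)^2 - l)*(u^2+v^2)^2*Real.sin (l*w*t)*(w⁻¹)^2/4) * h
        + ((l^2*l⁻¹*(w⁻¹)^2*(u^2+v^2)^2*Real.sin (l*w*t)/4)*(1-Real.cos (l*w*t))
            - l*(u^2+v^2)*Real.sin (l*w*t)/2) * hli
        + (-(l^2*l⁻¹*(u^2+v^2)*Real.sin (l*w*t)/2)) * hwi
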